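/- On the variety V = {(x,y,z₁,z₂) ∈ ℝ⁴ : x⁸ = (z₁² + z₂²) y⁸}, the rational function g = x²/y², defined where y ≠ 0, extends to a continuous function on all of V, equal to (z₁² + z₂²)^{1/4} everywhere on V. Moreover the rational function x/y does NOT extend continuously to V: along points (x, y, 1, 0) ∈ V with y ≠ 0 one has (x/y)⁸ = 1, and x/y takes both values near 1 and near −1 arbitrarily close to (0,0,1,0), so no continuous extension exists at (0,0,1,0). -/

import Mathlib

/-- The hypersurface `x⁸ = (z₁² + z₂²) y⁸` in `ℝ⁴`, coordinates `(x, y, z₁, z₂)`. -/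
def V17 : Set (ℝ × ℝ × ℝ × ℝ) :=
  {p | p.1 ^ 8 = (p.2.2.1 ^ 2 + p.2.2.2 ^ 2) * p.2.1 ^ 8}

/-- The continuous extension `(z₁² + z₂²)^{1/4}` of `x²/y²`. -/
noncomputable def g17 : ℝ × ℝ × ℝ × ℝ → ℝ :=
  fun p => (p.2.2.1 ^ 2 + p.2.2.2 ^ 2) ^ ((1 : ℝ) / 4)

/-- on `V : x⁸ = (z₁²+z₂²) y⁸`, the rational function `x²/y²` extends
continuously to all of `V` as `(z₁²+z₂²)^{1/4}`, whereas `x/y` satisfies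
`(x/y)⁸ = 1` on `{z₁ = 1, z₂ = 0} ∩ {y ≠ 0}` and admits no continuous extension
at the point `(0,0,1,0)`. -/
theorem stmt17 :
    ContinuousOn g17 V17 ∧
    (∀ p ∈ V17, p.2.1 ≠ 0 → g17 p = p.1 ^ 2 / p.2.1 ^ 2) ∧
    (∀ p ∈ V17, p.2.1 ≠ 0 → p.2.2.1 = 1 → p.2.2.2 = 0 → (p.1 / p.2.1) ^ 8 = 1) ∧
    ¬ ∃ h : ℝ × ℝ × ℝ × ℝ → ℝ,
        ContinuousWithinAt h V17 (0, 0, 1, 0) ∧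
        ∀ p ∈ V17, p.2.1 ≠ 0 → h p = p.1 / p.2.1 := by
  refine ⟨?_, ?_, ?_, ?_⟩
  · refine Continuous.continuousOn ?_
    refine Continuous.rpow_const ?_ ?_
    · fun_prop
    · intro x; right; norm_num
  · intro p hp hy
    have hV : p.1 ^ 8 = (p.2.2.1 ^ 2 + p.2.2.2 ^ 2) * p.2.1 ^ 8 := hp
    set a : ℝ := p.1 ^ 2 / p.2.1 ^ 2 with ha
    have ha0 : 0 ≤ a := div_nonneg (sq_nonneg _) (sq_nonneg _)
    have h4 : a ^ (4 : ℕ) = p.2.2.1 ^ 2 + p.2.2.2 ^ 2 := by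
      rw [ha]
      field_simp
      linarith [hV]
    show (p.2.2.1 ^ 2 + p.2.2.2 ^ 2) ^ ((1 : ℝ) / 4) = a
    rw [← h4, ← Real.rpow_natCast a 4, ← Real.rpow_mul ha0]
    norm_num
  · intro p hp hy h1 h2
    have hV : p.1 ^ 8 = (p.2.2.1 ^ 2 + p.2.2.2 ^ 2) * p.2.1 ^ 8 := hp
    rw [h1, h2] at hV
    rw [div_pow, hV]
    field_simp
    norm_num
  · rintro ⟨h, hc, heq⟩
    set q : ℝ × ℝ × ℝ × ℝ := (0, 0, 1, 0) with hq
    have hseq : ∀ (s : ℝ), s ^ 8 = 1 →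
        ∀ (a : ℕ → ℝ × ℝ × ℝ × ℝ),
        (a = fun n : ℕ => (s / ((n:ℝ) + 1), 1 / ((n:ℝ) + 1), (1:ℝ), (0:ℝ))) →
        Filter.Tendsto (h ∘ a) Filter.atTop (nhds (h q)) := by
      intro s hs a hadef
      refine hc.tendsto.comp ?_
      have h1 : Filter.Tendsto (fun n : ℕ => (1 : ℝ) / (n + 1)) Filter.atTop (nhds 0) :=
        tendsto_one_div_add_atTop_nhds_zero_nat
      have h2 : Filter.Tendsto (fun n : ℕ => s / (n + 1)) Filter.atTop (nhds 0) := by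
        have := h1.const_mul s
        simpa [mul_one_div, div_eq_mul_inv] using this
      refine tendsto_nhdsWithin_of_tendsto_nhds_of_eventually_within _ ?_ ?_
      · rw [hadef, hq]
        exact (h2.prodMk_nhds (h1.prodMk_nhds
          ((tendsto_const_nhds).prodMk_nhds tendsto_const_nhds)))
      · filter_upwards with n
        rw [hadef]
        show (s / (n + 1 : ℝ)) ^ 8 = ((1:ℝ) ^ 2 + 0 ^ 2) * (1 / (n + 1 : ℝ)) ^ 8
        have : (n : ℝ) + 1 ≠ 0 := by positivity
        field_simp [hs]
        norm_num [hs]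
    have hval : ∀ (s : ℝ), s ^ 8 = 1 → ∀ n : ℕ,
        h (s / ((n:ℝ) + 1), 1 / ((n:ℝ) + 1), (1:ℝ), (0:ℝ)) = s := by
      intro s hs n
      have hn : (n : ℝ) + 1 ≠ 0 := by positivity
      have hy : (1 : ℝ) / (n + 1) ≠ 0 := by positivity
      have hmem : ((s / ((n:ℝ) + 1), 1 / ((n:ℝ) + 1), (1:ℝ), (0:ℝ)) : ℝ × ℝ × ℝ × ℝ) ∈ V17 := by
        show (s / (n + 1 : ℝ)) ^ 8 = ((1:ℝ) ^ 2 + 0 ^ 2) * (1 / (n + 1 : ℝ)) ^ 8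
        field_simp [hs]
        norm_num [hs]
      rw [heq _ hmem hy]
      show s / ((n:ℝ) + 1) / (1 / ((n:ℝ) + 1)) = s
      field_simp
    have t1 : Filter.Tendsto (h ∘ fun n : ℕ => ((1:ℝ) / ((n:ℝ) + 1), 1 / ((n:ℝ) + 1), (1:ℝ), (0:ℝ)))
        Filter.atTop (nhds (h q)) := hseq 1 (by norm_num) _ rfl
    have t2 : Filter.Tendsto (h ∘ fun n : ℕ => ((-1:ℝ) / ((n:ℝ) + 1), 1 / ((n:ℝ) + 1), (1:ℝ), (0:ℝ)))
        Filter.atTop (nhds (h q)) := hseq (-1) (by norm_num) _ rfl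
    have e1 : h q = 1 := by
      have : (h ∘ fun n : ℕ => ((1:ℝ) / ((n:ℝ) + 1), 1 / ((n:ℝ) + 1), (1:ℝ), (0:ℝ))) = fun _ => (1:ℝ) := by
        funext n; exact hval 1 (by norm_num) n
      rw [this] at t1
      exact (tendsto_nhds_unique t1 tendsto_const_nhds).symm ▸ rfl
    have e2 : h q = -1 := by
      have : (h ∘ fun n : ℕ => ((-1:ℝ) / ((n:ℝ) + 1), 1 / ((n:ℝ) + 1), (1:ℝ), (0:ℝ))) = fun _ => (-1:ℝ) := by
        funext n; exact hval (-1) (by norm_num) n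
      rw [this] at t2
      exact tendsto_nhds_unique t2 tendsto_const_nhds
    rw [e1] at e2
    norm_num at e2
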